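/- Let C₁, C₂ be two circles on the unit sphere S² (intersections of S² with planes through the origin), representing directions parallel to two planes Σ₁, Σ₂. If the angle between Σ₁ and Σ₂ is at least K·η (for η > 0, K ≥ 2), then the set of directions v ∈ C₂ with dist(v, C₁) ≤ η is contained in the union of two spherical caps of angular radius O(1/K)·(appropriately: radius η/ sin(∠(Σ₁,Σ₂)) ≤ 1/K). -/

import Mathlib

open scoped RealInnerProductSpace

lemma exists_onb_pair (u w : EuclideanSpace ℝ (Fin 3)) (hu : ‖u‖ = 1) (hw : ‖w‖ = 1)
    (huw : ⟪u, w⟫ = 0) :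
    ∃ b : OrthonormalBasis (Fin 3) ℝ (EuclideanSpace ℝ (Fin 3)), b 0 = u ∧ b 1 = w := by
  set v : Fin 3 → EuclideanSpace ℝ (Fin 3) := ![u, w, 0] with hv
  have hcard : Module.finrank ℝ (EuclideanSpace ℝ (Fin 3)) = Fintype.card (Fin 3) := by
    simp [finrank_euclideanSpace]
  have horth : Orthonormal ℝ (({0, 1} : Set (Fin 3)).restrict v) := by
    constructor
    · rintro ⟨i, hi⟩
      rcases hi with rfl | rfl <;> simp [v, hu, hw, Set.restrict]
    · rintro ⟨i, hi⟩ ⟨j, hj⟩ hij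
      have hne : i ≠ j := by simpa [Subtype.ext_iff] using hij
      rcases hi with rfl | rfl <;> rcases hj with rfl | rfl <;>
        simp_all [v, huw, real_inner_comm u w, Set.restrict]
  obtain ⟨b, hb⟩ := horth.exists_orthonormalBasis_extension_of_card_eq hcard
  exact ⟨b, by simpa [v] using hb 0 (by simp), by simpa [v] using hb 1 (by simp)⟩

lemma close_pair (u n w x : EuclideanSpace ℝ (Fin 3)) (hu : ‖u‖ = 1) (hn : ‖n‖ = 1)
    (hw : ‖w‖ = 1) (hx : ‖x‖ = 1) (hun : ⟪u, n⟫ = 0) (hwn : ⟪w, n⟫ = 0) (hxn : ⟪x, n⟫ = 0)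
    (t : ℝ) (ht0 : 0 ≤ t) (ht : t ≤ 1 / 2) (hwt : |⟪w, u⟫| ≤ t) (hxt : |⟪x, u⟫| ≤ t) :
    1 - 2 * t ^ 2 ≤ |⟪w, x⟫| := by
  obtain ⟨b, hb0, hb1⟩ := exists_onb_pair u n hu hn hun
  set a : ℝ := ⟪w, u⟫ with ha
  set a₀ : ℝ := ⟪x, u⟫ with ha₀
  set c : ℝ := ⟪w, b 2⟫ with hc
  set c₀ : ℝ := ⟪x, b 2⟫ with hc₀
  have hsum_w := b.sum_inner_mul_inner w w
  have hsum_x := b.sum_inner_mul_inner x x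
  have hsum_wx := b.sum_inner_mul_inner w x
  rw [Fin.sum_univ_three] at hsum_w hsum_x hsum_wx
  have hww : ⟪w, w⟫ = 1 := by
    rw [real_inner_self_eq_norm_sq, hw]; norm_num
  have hxx : ⟪x, x⟫ = 1 := by
    rw [real_inner_self_eq_norm_sq, hx]; norm_num
  rw [hb0, hb1] at hsum_w hsum_x hsum_wx
  rw [real_inner_comm w u, real_inner_comm w n, real_inner_comm w (b 2), hwn, hww] at hsum_w
  rw [real_inner_comm x u, real_inner_comm x n, real_inner_comm x (b 2), hxn, hxx] at hsum_x
  rw [real_inner_comm x u, real_inner_comm x (b 2), hwn] at hsum_wx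
  have hw2 : a ^ 2 + c ^ 2 = 1 := by linear_combination hsum_w
  have hx2 : a₀ ^ 2 + c₀ ^ 2 = 1 := by linear_combination hsum_x
  set d : ℝ := ⟪w, x⟫ with hd
  have hwx : a * a₀ + c * c₀ = d := by linear_combination hsum_wx
  clear_value a a₀ c c₀ d

  clear hsum_w hsum_x hsum_wx ha ha₀ hc hc₀ hd hww hxx hb0 hb1
  have ha2 : a ^ 2 ≤ t ^ 2 := by nlinarith [sq_abs a, abs_nonneg a]
  have ha₀2 : a₀ ^ 2 ≤ t ^ 2 := by nlinarith [sq_abs a₀, abs_nonneg a₀]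
  have ht2 : t ^ 2 ≤ 1 / 4 := by nlinarith
  have hcc : 1 - t ^ 2 ≤ |c * c₀| := by
    nlinarith [sq_abs (c * c₀), abs_nonneg (c * c₀), sq_nonneg (c * c₀)]
  have haa : |a * a₀| ≤ t ^ 2 := by
    rw [abs_mul]
    calc |a| * |a₀| ≤ t * t := mul_le_mul hwt hxt (abs_nonneg _) ht0
    _ = t ^ 2 := by ring
  have : |c * c₀| ≤ |d| + |a * a₀| := by
    calc |c * c₀| = |(a * a₀ + c * c₀) - a * a₀| := by norm_num
    _ ≤ |a * a₀ + c * c₀| + |a * a₀| := abs_sub _ _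
    _ = |d| + |a * a₀| := by rw [hwx]
  linarith

lemma exists_unit_orthogonal (nn : EuclideanSpace ℝ (Fin 3)) (h : ‖nn‖ = 1) :
    ∃ w : EuclideanSpace ℝ (Fin 3), ‖w‖ = 1 ∧ ⟪w, nn⟫ = 0 := by
  set v : Fin 3 → EuclideanSpace ℝ (Fin 3) := ![nn, 0, 0] with hv
  have hcard : Module.finrank ℝ (EuclideanSpace ℝ (Fin 3)) = Fintype.card (Fin 3) := by
    simp [finrank_euclideanSpace]
  have horth : Orthonormal ℝ (({0} : Set (Fin 3)).restrict v) := by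
    constructor
    · rintro ⟨i, rfl⟩; simp [v, h, Set.restrict]
    · rintro ⟨i, rfl⟩ ⟨j, rfl⟩ hij; simp at hij
  obtain ⟨b, hb⟩ := horth.exists_orthonormalBasis_extension_of_card_eq hcard
  have hb0 : b 0 = nn := by simpa [v] using hb 0 (by simp)
  refine ⟨b 1, b.orthonormal.1 1, ?_⟩
  rw [← hb0]
  exact b.orthonormal.2 (by decide : (1 : Fin 3) ≠ 0)

set_option maxHeartbeats 1000000 in
/-- Directions on the circle `C₂` (unit vectors orthogonal to `n₂`) that are within
distance `η` of the circle `C₁` (unit vectors orthogonal to `n₁`) are contained in two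
caps of radius `O(1/K)`, provided the angle between the planes satisfies
`sin ∠(Σ₁, Σ₂) ≥ K η`. -/
theorem two_caps (n₁ n₂ : EuclideanSpace ℝ (Fin 3)) (hn₁ : ‖n₁‖ = 1) (hn₂ : ‖n₂‖ = 1)
    (η K : ℝ) (hη : 0 < η) (hK : 2 ≤ K)
    (hangle : K * η ≤ Real.sin (InnerProductGeometry.angle n₁ n₂)) :
    ∃ c₁ c₂ : EuclideanSpace ℝ (Fin 3),
      {v : EuclideanSpace ℝ (Fin 3) | ‖v‖ = 1 ∧ ⟪v, n₂⟫ = 0 ∧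
          Metric.infDist v {w : EuclideanSpace ℝ (Fin 3) | ‖w‖ = 1 ∧ ⟪w, n₁⟫ = 0} ≤ η}
        ⊆ Metric.closedBall c₁ (2 / K) ∪ Metric.closedBall c₂ (2 / K) := by
  classical
  have hKpos : (0 : ℝ) < K := by linarith
  set C₁ : Set (EuclideanSpace ℝ (Fin 3)) :=
    {w : EuclideanSpace ℝ (Fin 3) | ‖w‖ = 1 ∧ ⟪w, n₁⟫ = 0} with hC₁
  set S : Set (EuclideanSpace ℝ (Fin 3)) :=
    {v : EuclideanSpace ℝ (Fin 3) | ‖v‖ = 1 ∧ ⟪v, n₂⟫ = 0 ∧ Metric.infDist v C₁ ≤ η} with hS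
  -- the sine of the angle
  have hsin : Real.sin (InnerProductGeometry.angle n₁ n₂)
      = Real.sqrt (1 - ⟪n₁, n₂⟫ ^ 2) := by
    rw [InnerProductGeometry.angle, hn₁, hn₂]
    simp [Real.sin_arccos]
  set c : ℝ := ⟪n₁, n₂⟫ with hc
  set p : EuclideanSpace ℝ (Fin 3) := n₁ - c • n₂ with hp
  have hp2 : ‖p‖ ^ 2 = 1 - c ^ 2 := by
    rw [hp, norm_sub_sq_real, real_inner_smul_right, norm_smul, hn₁, hn₂, ← hc]
    simp [abs_of_nonneg, mul_pow, sq_abs]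
    ring
  have hpnorm : ‖p‖ = Real.sqrt (1 - c ^ 2) := by
    rw [← hp2, Real.sqrt_sq (norm_nonneg _)]
  have hKp : K * η ≤ ‖p‖ := by rw [hpnorm, ← hsin]; exact hangle
  have hppos : 0 < ‖p‖ := lt_of_lt_of_le (by positivity) hKp
  set u : EuclideanSpace ℝ (Fin 3) := ‖p‖⁻¹ • p with hu
  have hu1 : ‖u‖ = 1 := by
    rw [hu, norm_smul, norm_inv, norm_norm, inv_mul_cancel₀ hppos.ne']
  have hun : ⟪u, n₂⟫ = 0 := by
    rw [hu, real_inner_smul_left, hp, inner_sub_left, real_inner_smul_left,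
      real_inner_self_eq_norm_sq, hn₂]
    ring
  -- nonempty first circle
  obtain ⟨w₀, hw₀1, hw₀2⟩ := exists_unit_orthogonal n₁ hn₁
  have hC₁ne : C₁.Nonempty := ⟨w₀, hw₀1, hw₀2⟩
  haveI : Nonempty C₁ := hC₁ne.to_subtype
  -- each element of S has small inner product with u
  have hmem : ∀ v ∈ S, |⟪v, u⟫| ≤ 1 / K := by
    rintro v ⟨hv1, hv2, hv3⟩
    have hlow : |⟪v, n₁⟫| ≤ Metric.infDist v C₁ := by
      rw [Metric.infDist_eq_iInf]
      apply le_ciInf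
      rintro ⟨w, hw1, hw2⟩
      have : ⟪v - w, n₁⟫ = ⟪v, n₁⟫ := by rw [inner_sub_left, hw2, sub_zero]
      calc |⟪v, n₁⟫| = |⟪v - w, n₁⟫| := by rw [this]
        _ ≤ ‖v - w‖ * ‖n₁‖ := abs_real_inner_le_norm _ _
        _ = dist v w := by rw [hn₁, mul_one, dist_eq_norm]
    have hn₁η : |⟪v, n₁⟫| ≤ η := hlow.trans hv3
    have hvu : ⟪v, u⟫ = ‖p‖⁻¹ * ⟪v, n₁⟫ := by
      rw [hu, real_inner_smul_right, hp, inner_sub_right, real_inner_smul_right, hv2,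
        mul_zero, sub_zero]
    rw [hvu, abs_mul, abs_inv, abs_norm]
    calc ‖p‖⁻¹ * |⟪v, n₁⟫| ≤ ‖p‖⁻¹ * η := by
          exact mul_le_mul_of_nonneg_left hn₁η (by positivity)
      _ ≤ (K * η)⁻¹ * η := by
          exact mul_le_mul_of_nonneg_right (inv_anti₀ (by positivity) hKp) hη.le
      _ = 1 / K := by field_simp
  rcases Set.eq_empty_or_nonempty S with hSe | ⟨v₀, hv₀⟩
  · exact ⟨0, 0, by rw [hSe]; exact Set.empty_subset _⟩
  refine ⟨v₀, -v₀, ?_⟩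
  obtain ⟨hv₀1, hv₀2, hv₀3⟩ := hv₀
  intro v hv
  obtain ⟨hv1, hv2, hv3⟩ := hv
  have h1 := hmem v ⟨hv1, hv2, hv3⟩
  have h2 := hmem v₀ ⟨hv₀1, hv₀2, hv₀3⟩
  have ht0 : (0 : ℝ) ≤ 1 / K := by positivity
  have ht : 1 / K ≤ 1 / 2 := by
    rw [div_le_div_iff₀ hKpos (by norm_num)]; linarith
  have hkey := close_pair u n₂ v v₀ hu1 hn₂ hv1 hv₀1 hun hv2 hv₀2 (1 / K) ht0 ht h1 h2
  set z : ℝ := ⟪v, v₀⟫ with hz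
  by_cases hsign : 0 ≤ z
  · left
    rw [Metric.mem_closedBall, dist_eq_norm]
    have hip : 1 - 2 * (1 / K) ^ 2 ≤ z := by rwa [abs_of_nonneg hsign] at hkey
    have hns : ‖v - v₀‖ ^ 2 = 2 - 2 * z := by
      rw [norm_sub_sq_real, hv1, hv₀1, ← hz]; ring
    set r : ℝ := ‖v - v₀‖ with hr
    have hr0 : 0 ≤ r := norm_nonneg _
    clear_value z r
    have hsq : r ^ 2 ≤ (2 / K) ^ 2 := by
      have hKK : (2 / K) ^ 2 = 4 * (1 / K) ^ 2 := by ring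
      nlinarith [hip, hns]
    calc r = Real.sqrt (r ^ 2) := (Real.sqrt_sq hr0).symm
      _ ≤ Real.sqrt ((2 / K) ^ 2) := Real.sqrt_le_sqrt hsq
      _ = 2 / K := Real.sqrt_sq (by positivity)
  · right
    rw [Metric.mem_closedBall, dist_eq_norm, sub_neg_eq_add]
    have hip : z ≤ -(1 - 2 * (1 / K) ^ 2) := by
      rw [abs_of_neg (not_le.1 hsign)] at hkey; linarith
    have hns : ‖v + v₀‖ ^ 2 = 2 + 2 * z := by
      rw [norm_add_sq_real, hv1, hv₀1, ← hz]; ring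
    set r : ℝ := ‖v + v₀‖ with hr
    have hr0 : 0 ≤ r := norm_nonneg _
    clear_value z r
    have hsq : r ^ 2 ≤ (2 / K) ^ 2 := by
      have hKK : (2 / K) ^ 2 = 4 * (1 / K) ^ 2 := by ring
      nlinarith [hip, hns]
    calc r = Real.sqrt (r ^ 2) := (Real.sqrt_sq hr0).symm
      _ ≤ Real.sqrt ((2 / K) ^ 2) := Real.sqrt_le_sqrt hsq
      _ = 2 / K := Real.sqrt_sq (by positivity)
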